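/- Let X ⊂ ℝ^d be a compact convex set with nonempty interior, let Q ⊂ ℝ^d be a compact convex set, let a ≤ b be real numbers, and let K be the set of all convex functions u : X → ℝ such that a ≤ u(x) ≤ b for all x ∈ X and such that every subgradient of u at every interior point of X lies in Q. Then K is a convex and compact subset of the space C(X) of continuous functions on X equipped with the supremum norm. -/

import Mathlib

open Filter Topology

variable {d : ℕ}

local notation "E" => EuclideanSpace ℝ (Fin d)

/-- Existence of a subgradient of a convex function (continuous on `X`) at an interior
point of `X`. -/
lemma exists_subgradient' {X : Set (EuclideanSpace ℝ (Fin d))}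
    (hXconv : Convex ℝ X) {u : EuclideanSpace ℝ (Fin d) → ℝ}
    (hu : ConvexOn ℝ X u) (hC : ContinuousOn u X)
    {x : EuclideanSpace ℝ (Fin d)} (hx : x ∈ interior X) :
    ∃ g : EuclideanSpace ℝ (Fin d), ∀ y ∈ X, u x + (inner ℝ (y - x) g : ℝ) ≤ u y := by
  classical
  set S : Set ((EuclideanSpace ℝ (Fin d)) × ℝ) :=
    {p | p.1 ∈ interior X ∧ u p.1 < p.2} with hS
  have hSopen : IsOpen S := by
    rw [isOpen_iff_mem_nhds]
    rintro ⟨z, t⟩ ⟨hz, hzt⟩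
    have hca : ContinuousAt u z :=
      (hC z (interior_subset hz)).continuousAt (mem_interior_iff_mem_nhds.mp hz)
    have h2 : ContinuousAt (fun p : (EuclideanSpace ℝ (Fin d)) × ℝ => p.2 - u p.1) (z, t) :=
      continuousAt_snd.sub (hca.comp continuousAt_fst)
    have h3 : ∀ᶠ p : (EuclideanSpace ℝ (Fin d)) × ℝ in 𝓝 (z, t), 0 < p.2 - u p.1 :=
      h2 (Ioi_mem_nhds (by simpa [sub_pos] using hzt))
    have h1 : ∀ᶠ p : (EuclideanSpace ℝ (Fin d)) × ℝ in 𝓝 (z, t), p.1 ∈ interior X :=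
      continuousAt_fst (isOpen_interior.mem_nhds hz)
    filter_upwards [h1, h3] with p hp1 hp3
    exact ⟨hp1, by linarith⟩
  have hSconv : Convex ℝ S := by
    rintro ⟨z, s⟩ ⟨hz, hzs⟩ ⟨w, t⟩ ⟨hw, hwt⟩ α β hα hβ hαβ
    have hmem : α • z + β • w ∈ interior X := hXconv.interior hz hw hα hβ hαβ
    have hval : u (α • z + β • w) ≤ α * u z + β * u w :=
      hu.2 (interior_subset hz) (interior_subset hw) hα hβ hαβ
    have hstrict : α * u z + β * u w < α * s + β * t := by
      rcases lt_or_eq_of_le hα with hα' | hα'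
      · have h1 := mul_lt_mul_of_pos_left hzs hα'
        have h2 := mul_le_mul_of_nonneg_left hwt.le hβ
        linarith
      · have hβ1 : β = 1 := by linarith
        rw [← hα', hβ1]; simpa using hwt
    exact ⟨hmem, by simpa using lt_of_le_of_lt hval hstrict⟩
  have hnotmem : (x, u x) ∉ S := fun h => lt_irrefl _ h.2
  obtain ⟨f, hf⟩ := geometric_hahn_banach_point_open hSconv hSopen hnotmem
  set c : ℝ := f ((0 : EuclideanSpace ℝ (Fin d)), (1 : ℝ)) with hcdef
  have hkey : ∀ (z : EuclideanSpace ℝ (Fin d)) (t : ℝ), f (z, t) = f (z, 0) + t * c := by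
    intro z t
    have hsplit : (z, t) = (z, (0 : ℝ)) + t • ((0 : EuclideanSpace ℝ (Fin d)), (1 : ℝ)) := by
      simp [Prod.ext_iff]
    rw [hsplit, map_add, map_smul, smul_eq_mul]
  have hc : 0 < c := by
    have h1 := hf (x, u x + 1) ⟨hx, by show u x < u x + 1; linarith⟩
    rw [hkey x (u x + 1), hkey x (u x)] at h1
    linarith
  have hcne : c ≠ 0 := ne_of_gt hc
  have hmain : ∀ z ∈ interior X, f (x, 0) + u x * c ≤ f (z, 0) + u z * c := by
    intro z hz
    refine le_of_forall_pos_lt_add fun ε hε => ?_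
    have h1 := hf (z, u z + ε / c) ⟨hz, by
      show u z < u z + ε / c
      have : 0 < ε / c := by positivity
      linarith⟩
    rw [hkey x (u x), hkey z (u z + ε / c)] at h1
    have h2 : (u z + ε / c) * c = u z * c + ε := by field_simp
    linarith
  set L : (EuclideanSpace ℝ (Fin d)) →L[ℝ] ℝ :=
    f.comp (ContinuousLinearMap.inl ℝ (EuclideanSpace ℝ (Fin d)) ℝ) with hLdef
  set w : EuclideanSpace ℝ (Fin d) :=
    (InnerProductSpace.toDual ℝ (EuclideanSpace ℝ (Fin d))).symm ((-c⁻¹) • L) with hwdef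
  have hw : ∀ y : EuclideanSpace ℝ (Fin d), (inner ℝ w y : ℝ) = -c⁻¹ * f (y, 0) := by
    intro y
    rw [hwdef, InnerProductSpace.toDual_symm_apply]
    simp [hLdef]
  have hwsub : ∀ z ∈ interior X, u x + (inner ℝ (z - x) w : ℝ) ≤ u z := by
    intro z hz
    have h := hmain z hz
    have hinner : (inner ℝ (z - x) w : ℝ) = -c⁻¹ * (f (z, 0) - f (x, 0)) := by
      rw [real_inner_comm, inner_sub_right, hw z, hw x]; ring
    rw [hinner, ← mul_le_mul_iff_right₀ hc]
    have hcc : c * (-c⁻¹ * (f (z, 0) - f (x, 0))) = -(f (z, 0) - f (x, 0)) := by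
      field_simp
    rw [mul_add, hcc]
    nlinarith [h]
  refine ⟨w, fun y hy => ?_⟩
  have hmid : (1 / 2 : ℝ) • x + (1 / 2 : ℝ) • y ∈ interior X :=
    hXconv.combo_interior_closure_mem_interior hx (subset_closure hy) (by norm_num)
      (by norm_num) (by norm_num)
  have h1 := hwsub _ hmid
  have h2 : u ((1 / 2 : ℝ) • x + (1 / 2 : ℝ) • y) ≤ (1 / 2) * u x + (1 / 2) * u y :=
    hu.2 (interior_subset hx) hy (by norm_num) (by norm_num) (by norm_num)
  have h3 : ((1 / 2 : ℝ) • x + (1 / 2 : ℝ) • y) - x = (1 / 2 : ℝ) • (y - x) := by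
    module
  rw [h3, real_inner_smul_left] at h1
  linarith

/-- Every point of a convex set with some interior point lies in the closure of the
interior. -/
lemma mem_closure_interior'' {X : Set (EuclideanSpace ℝ (Fin d))}
    (hXconv : Convex ℝ X) {x₀ x : EuclideanSpace ℝ (Fin d)}
    (hx₀ : x₀ ∈ interior X) (hx : x ∈ X) : x ∈ closure (interior X) := by
  have hcont : Continuous fun t : ℝ => t • x₀ + (1 - t) • x := by
    fun_prop
  have htt : Tendsto (fun t : ℝ => t • x₀ + (1 - t) • x) (𝓝[>] (0 : ℝ)) (𝓝 x) := by
    have h := (hcont.tendsto 0).mono_left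
      (nhdsWithin_le_nhds : 𝓝[>] (0 : ℝ)  ≤ 𝓝 0)
    simpa using h
  refine mem_closure_of_tendsto htt ?_
  filter_upwards [Ioc_mem_nhdsGT_of_mem (Set.left_mem_Ico.mpr one_pos)] with t ht
  exact hXconv.combo_interior_closure_mem_interior hx₀ (subset_closure hx) ht.1
    (by linarith [ht.2]) (by ring)

/-- If `g` is a subgradient at an interior point `x` and the difference quotients of `u`
from `x` are dominated by subgradients belonging to the closed convex set `Q`, then
`g ∈ Q`. -/
lemma subgradient_mem_of_support {X Q : Set (EuclideanSpace ℝ (Fin d))}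
    (hQc : IsCompact Q) (hQconv : Convex ℝ Q) {u : EuclideanSpace ℝ (Fin d) → ℝ}
    {x : EuclideanSpace ℝ (Fin d)} (hx : x ∈ interior X)
    {g : EuclideanSpace ℝ (Fin d)}
    (hg : ∀ y ∈ X, u x + (inner ℝ (y - x) g : ℝ) ≤ u y)
    (hb : ∀ y ∈ interior X, ∃ q ∈ Q, u y - u x ≤ (inner ℝ (y - x) q : ℝ)) :
    g ∈ Q := by
  by_contra hgQ
  obtain ⟨f, s, hfs, hsg⟩ := geometric_hahn_banach_closed_point hQconv hQc.isClosed hgQ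
  set v : EuclideanSpace ℝ (Fin d) :=
    (InnerProductSpace.toDual ℝ (EuclideanSpace ℝ (Fin d))).symm f with hvdef
  have hv : ∀ z : EuclideanSpace ℝ (Fin d), (inner ℝ v z : ℝ) = f z := fun z =>
    InnerProductSpace.toDual_symm_apply
  obtain ⟨ε, hε, hball⟩ := Metric.isOpen_iff.mp isOpen_interior x hx
  set t : ℝ := ε / (2 * (‖v‖ + 1)) with htdef
  have htpos : 0 < t := by positivity
  have hy : x + t • v ∈ interior X := by
    apply hball
    have : dist (x + t • v) x = t * ‖v‖ := by
      rw [dist_eq_norm]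
      simp [norm_smul, abs_of_pos htpos]
    rw [Metric.mem_ball, this, htdef]
    rw [div_mul_eq_mul_div, div_lt_iff₀ (by positivity)]
    nlinarith [norm_nonneg v]
  obtain ⟨q, hqQ, hq⟩ := hb _ hy
  have h1 := hg _ (interior_subset hy)
  have hsimp : x + t • v - x = t • v := by abel
  rw [hsimp, real_inner_smul_left] at h1 hq
  have hvg : (inner ℝ v g : ℝ) = f g := hv g
  have hvq : (inner ℝ v q : ℝ) = f q := hv q
  have hfq := hfs q hqQ
  nlinarith [mul_le_mul_of_nonneg_left (hvq ▸ hfq.le) htpos.le,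
    mul_le_mul_of_nonneg_left hsg.le htpos.le]

/-- The set `K` of admissible (convex, bounded, with subgradients in a compact convex
set `Q`) utility functions is a convex and compact subset of the space of continuous
functions on the compact convex set `X`, equipped with the supremum norm (here realized
by the bounded continuous functions on `X`). -/
theorem admissible_utilities_convex_compact (d : ℕ)
    (X Q : Set (EuclideanSpace ℝ (Fin d)))
    (hXc : IsCompact X) (hXconv : Convex ℝ X) (hXint : (interior X).Nonempty)
    (hQc : IsCompact Q) (hQconv : Convex ℝ Q)
    (a b : ℝ) (hab : a ≤ b)
    (K : Set (BoundedContinuousFunction X ℝ))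
    (hK : ∀ f : BoundedContinuousFunction X ℝ,
      f ∈ K ↔ ∃ u : EuclideanSpace ℝ (Fin d) → ℝ,
        ConvexOn ℝ X u ∧
        (∀ x ∈ X, a ≤ u x ∧ u x ≤ b) ∧
        (∀ x ∈ interior X, ∀ g : EuclideanSpace ℝ (Fin d),
          (∀ y ∈ X, u x + (inner ℝ (y - x) g : ℝ) ≤ u y) → g ∈ Q) ∧
        (∀ x : X, f x = u x)) :
    Convex ℝ K ∧ IsCompact K := by
  classical
  obtain ⟨x₀, hx₀⟩ := hXint
  haveI : CompactSpace X := isCompact_iff_compactSpace.mp hXc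
  -- a uniform bound on the norms of elements of `Q`
  obtain ⟨C, hC⟩ := hQc.isBounded.subset_closedBall 0
  set M : ℝ := max C 1 with hMdef
  have hMpos : 0 < M := lt_of_lt_of_le one_pos (le_max_right _ _)
  have hMQ : ∀ q ∈ Q, ‖q‖ ≤ M := fun q hq =>
    le_trans (mem_closedBall_zero_iff.mp (hC hq)) (le_max_left _ _)
  -- continuity on X of any witness function
  have hCu : ∀ (f : BoundedContinuousFunction X ℝ) (u : EuclideanSpace ℝ (Fin d) → ℝ),
      (∀ x : X, f x = u x) → ContinuousOn u X := by
    intro f u h4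
    rw [continuousOn_iff_continuous_restrict]
    have : X.restrict u = fun x : X => f x := funext fun x => (h4 x).symm
    change Continuous (X.restrict u); rw [this]
    exact f.continuous
  -- the one-sided Lipschitz estimate on the interior
  have hlip_int : ∀ (u : EuclideanSpace ℝ (Fin d) → ℝ), ConvexOn ℝ X u →
      ContinuousOn u X →
      (∀ x ∈ interior X, ∀ g : EuclideanSpace ℝ (Fin d),
        (∀ y ∈ X, u x + (inner ℝ (y - x) g : ℝ) ≤ u y) → g ∈ Q) →
      ∀ y ∈ interior X, ∀ z ∈ X, u y - u z ≤ M * ‖y - z‖ := by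
    intro u h1 hcont h3 y hy z hz
    obtain ⟨g, hg⟩ := exists_subgradient' hXconv h1 hcont hy
    have hgQ : g ∈ Q := h3 y hy g hg
    have h := hg z hz
    have hinner : (inner ℝ (z - y) g : ℝ) = -(inner ℝ (y - z) g : ℝ) := by
      rw [← inner_neg_left, neg_sub]
    have hbound : (inner ℝ (y - z) g : ℝ) ≤ M * ‖y - z‖ := by
      calc (inner ℝ (y - z) g : ℝ) ≤ ‖y - z‖ * ‖g‖ := real_inner_le_norm _ _
        _ ≤ ‖y - z‖ * M := mul_le_mul_of_nonneg_left (hMQ g hgQ) (norm_nonneg _)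
        _ = M * ‖y - z‖ := mul_comm _ _
    rw [hinner] at h
    linarith
  -- global Lipschitz estimate
  have hlip : ∀ f ∈ K, ∀ p q : X, dist (f p) (f q) ≤ M * dist p q := by
    intro f hf p q
    obtain ⟨u, h1, h2, h3, h4⟩ := (hK f).mp hf
    have hcont := hCu f u h4
    have key : ∀ y ∈ X, ∀ z ∈ X, u y - u z ≤ M * ‖y - z‖ := by
      intro y hy z hz
      have hycl : y ∈ closure (interior X) := mem_closure_interior'' hXconv hx₀ hy
      have hne : (𝓝[interior X] y).NeBot := mem_closure_iff_nhdsWithin_neBot.mp hycl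
      have htend : Tendsto (fun w => u w - u z - M * ‖w - z‖) (𝓝[interior X] y)
          (𝓝 (u y - u z - M * ‖y - z‖)) := by
        refine Tendsto.sub (Tendsto.sub ?_ tendsto_const_nhds) ?_
        · exact (hcont y hy).mono interior_subset
        · have : Continuous fun w : EuclideanSpace ℝ (Fin d) => M * ‖w - z‖ := by
            fun_prop
          exact (this.tendsto y).mono_left nhdsWithin_le_nhds
      have hev : ∀ᶠ w in 𝓝[interior X] y, u w - u z - M * ‖w - z‖ ≤ 0 := by
        filter_upwards [self_mem_nhdsWithin] with w hw
        have := hlip_int u h1 hcont h3 w hw z hz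
        linarith
      have := le_of_tendsto htend hev
      linarith
    have e1 := key p p.2 q q.2
    have e2 := key q q.2 p p.2
    rw [h4 p, h4 q, Real.dist_eq, Subtype.dist_eq, dist_eq_norm]
    rw [abs_le]
    constructor
    · have : ‖(q : EuclideanSpace ℝ (Fin d)) - p‖ = ‖(p : EuclideanSpace ℝ (Fin d)) - q‖ := by
        rw [norm_sub_rev]
      rw [this] at e2
      linarith
    · linarith
  -- K is closed
  have hclosed : IsClosed K := by
    refine IsSeqClosed.isClosed ?_
    intro fs f hmem htends
    have hpt : ∀ p : X, Tendsto (fun n => fs n p) atTop (𝓝 (f p)) := by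
      intro p
      rw [tendsto_iff_dist_tendsto_zero]
      have hb : ∀ n, dist (fs n p) (f p) ≤ dist (fs n) f := fun n =>
        BoundedContinuousFunction.dist_coe_le_dist p
      exact squeeze_zero (fun n => dist_nonneg) hb
        (tendsto_iff_dist_tendsto_zero.mp htends)
    choose un h1 h2 h3 h4 using fun n => (hK (fs n)).mp (hmem n)
    set u : EuclideanSpace ℝ (Fin d) → ℝ := fun y => if h : y ∈ X then f ⟨y, h⟩ else 0
      with hudef
    have hu4 : ∀ p : X, f p = u p := by
      intro p
      simp [hudef, p.2]
    have hptX : ∀ y (hy : y ∈ X), Tendsto (fun n => un n y) atTop (𝓝 (u y)) := by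
      intro y hy
      have := hpt ⟨y, hy⟩
      have heq : (fun n => fs n ⟨y, hy⟩) = fun n => un n y :=
        funext fun n => h4 n ⟨y, hy⟩
      rw [heq] at this
      rwa [hu4 ⟨y, hy⟩] at this
    refine (hK f).mpr ⟨u, ⟨hXconv, ?_⟩, ?_, ?_, hu4⟩
    · intro z hz w hw α β hα hβ hαβ
      have hmem' : α • z + β • w ∈ X := hXconv hz hw hα hβ hαβ
      refine le_of_tendsto_of_tendsto' (hptX _ hmem')
        (((hptX z hz).const_mul α).add ((hptX w hw).const_mul β)) fun n => ?_
      exact (h1 n).2 hz hw hα hβ hαβ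
    · intro y hy
      exact ⟨ge_of_tendsto' (hptX y hy) fun n => (h2 n y hy).1,
        le_of_tendsto' (hptX y hy) fun n => (h2 n y hy).2⟩
    · intro x hx g hg
      refine subgradient_mem_of_support hQc hQconv hx hg ?_
      intro y hy
      -- subgradients of each `un n` at `y`
      have hsub : ∀ n, ∃ q ∈ Q, un n y - un n x ≤ (inner ℝ (y - x) q : ℝ) := by
        intro n
        obtain ⟨g', hg'⟩ := exists_subgradient' hXconv (h1 n) (hCu (fs n) (un n) (h4 n)) hy
        refine ⟨g', h3 n y hy g' hg', ?_⟩
        have := hg' x (interior_subset hx)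
        have hinner : (inner ℝ (x - y) g' : ℝ) = -(inner ℝ (y - x) g' : ℝ) := by
          rw [← inner_neg_left, neg_sub]
        rw [hinner] at this
        linarith
      obtain ⟨q0, hq0Q, _⟩ := hsub 0
      obtain ⟨qs, hqsQ, hqs⟩ := hQc.exists_isMaxOn ⟨q0, hq0Q⟩
        (((continuous_const.inner continuous_id :
          Continuous fun q : EuclideanSpace ℝ (Fin d) => (inner ℝ (y - x) q : ℝ))).continuousOn)
      refine ⟨qs, hqsQ, ?_⟩
      have htd : Tendsto (fun n => un n y - un n x) atTop (𝓝 (u y - u x)) :=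
        (hptX y (interior_subset hy)).sub (hptX x (interior_subset hx))
      refine le_of_tendsto' htd fun n => ?_
      obtain ⟨q, hqQ, hq⟩ := hsub n
      exact le_trans hq (hqs hqQ)
  -- Convexity of K
  have hconvK : Convex ℝ K := by
    intro f₁ hf₁ f₂ hf₂ α β hα hβ hαβ
    obtain ⟨u₁, h11, h21, h31, h41⟩ := (hK f₁).mp hf₁
    obtain ⟨u₂, h12, h22, h32, h42⟩ := (hK f₂).mp hf₂
    refine (hK _).mpr ⟨fun y => α * u₁ y + β * u₂ y, ?_, ?_, ?_, ?_⟩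
    · exact (h11.smul hα).add (h12.smul hβ)
    · intro y hy
      have A := h21 y hy
      have B := h22 y hy
      have e1 := mul_le_mul_of_nonneg_left A.1 hα
      have e2 := mul_le_mul_of_nonneg_left B.1 hβ
      have e3 := mul_le_mul_of_nonneg_left A.2 hα
      have e4 := mul_le_mul_of_nonneg_left B.2 hβ
      have ea : α * a + β * a = a := by rw [← add_mul, hαβ, one_mul]
      have eb : α * b + β * b = b := by rw [← add_mul, hαβ, one_mul]
      refine ⟨?_, ?_⟩
      · show a ≤ α * u₁ y + β * u₂ y
        linarith
      · show α * u₁ y + β * u₂ y ≤ b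
        linarith
    · intro x hx g hg
      refine subgradient_mem_of_support (u := fun y => α * u₁ y + β * u₂ y)
        hQc hQconv hx hg ?_
      intro y hy
      obtain ⟨q₁, hq₁⟩ := exists_subgradient' hXconv h11 (hCu f₁ u₁ h41) hy
      obtain ⟨q₂, hq₂⟩ := exists_subgradient' hXconv h12 (hCu f₂ u₂ h42) hy
      have hq₁Q : q₁ ∈ Q := h31 y hy q₁ hq₁
      have hq₂Q : q₂ ∈ Q := h32 y hy q₂ hq₂
      refine ⟨α • q₁ + β • q₂, hQconv hq₁Q hq₂Q hα hβ hαβ, ?_⟩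
      have e1 := hq₁ x (interior_subset hx)
      have e2 := hq₂ x (interior_subset hx)
      have hinner : ∀ q : EuclideanSpace ℝ (Fin d),
          (inner ℝ (x - y) q : ℝ) = -(inner ℝ (y - x) q : ℝ) := by
        intro q; rw [← inner_neg_left, neg_sub]
      rw [hinner q₁] at e1
      rw [hinner q₂] at e2
      have hsum : (inner ℝ (y - x) (α • q₁ + β • q₂) : ℝ)
          = α * (inner ℝ (y - x) q₁ : ℝ) + β * (inner ℝ (y - x) q₂ : ℝ) := by
        rw [inner_add_right, real_inner_smul_right, real_inner_smul_right]
      rw [hsum]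
      have e3 := mul_le_mul_of_nonneg_left (by linarith : u₁ y - u₁ x ≤ (inner ℝ (y - x) q₁ : ℝ)) hα
      have e4 := mul_le_mul_of_nonneg_left (by linarith : u₂ y - u₂ x ≤ (inner ℝ (y - x) q₂ : ℝ)) hβ
      rw [mul_sub] at e3 e4
      show α * u₁ y + β * u₂ y - (α * u₁ x + β * u₂ x) ≤ _
      linarith
    · intro p
      simp [h41 p, h42 p]
  refine ⟨hconvK, ?_⟩
  -- compactness via Arzelà–Ascoli
  have hAA : IsCompact (closure K) := by
    refine BoundedContinuousFunction.arzela_ascoli (Set.Icc a b) isCompact_Icc K ?_ ?_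
    · intro f p hf
      obtain ⟨u, h1, h2, h3, h4⟩ := (hK f).mp hf
      rw [h4 p]
      exact ⟨(h2 p p.2).1, (h2 p p.2).2⟩
    · apply Metric.equicontinuous_of_continuity_modulus (fun t => M * t)
      · have : Continuous fun t : ℝ => M * t := by fun_prop
        simpa using (this.tendsto 0).congr' (by simp)
      · intro p q i
        exact hlip i i.2 p q
  exact hAA.of_isClosed_subset hclosed subset_closure
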